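/- arXiv:2007.13158 — 3 statements merged into one kernel-verified Lean document; each statement's English description precedes it below -/
import Mathlib

section
/- For real parameters x₁, y₁, z₁ with z₁ ≠ 0, the double integral over the rectangle [−Lₓ, Lₓ] × [−L_y, L_y] of ((x−x₁)² + (y−y₁)² + z₁²)^(−3/2) dx dy equals z₁⁻¹ · F(x,y) evaluated with alternating signs at the four corners, where F(x,y) = arctan[ (x₁−x)(y₁−y) / ( z₁ √((x₁−x)² + (y₁−y)² + z₁²) ) ], i.e. the integral equals z₁⁻¹ (F(Lₓ,L_y) − F(Lₓ,−L_y) − F(−Lₓ,L_y) + F(−Lₓ,−L_y)). -/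
open Real

private lemma pow_neg_three_half (t : ℝ) (ht : 0 < t) :
    t ^ (-(3:ℝ)/2) = (Real.sqrt t ^ 3)⁻¹ := by
  have hs : Real.sqrt t ^ 3 = t ^ ((3:ℝ)/2) := by
    rw [← Real.rpow_natCast (Real.sqrt t) 3, Real.sqrt_eq_rpow, ← Real.rpow_mul ht.le]
    norm_num
  rw [hs, ← Real.rpow_neg ht.le]
  norm_num

private lemma inner_deriv (y₁ A : ℝ) (hA : 0 < A) (y : ℝ) :
    HasDerivAt (fun y => (y - y₁) / (A * Real.sqrt ((y - y₁) ^ 2 + A)))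
      ((Real.sqrt ((y - y₁) ^ 2 + A) ^ 3)⁻¹) y := by
  have hS : (0:ℝ) < (y - y₁) ^ 2 + A := by positivity
  set s := Real.sqrt ((y - y₁) ^ 2 + A) with hs
  have hsp : 0 < s := Real.sqrt_pos.mpr hS
  have hs2 : s ^ 2 = (y - y₁) ^ 2 + A := Real.sq_sqrt hS.le
  have h1 : HasDerivAt (fun y : ℝ => (y - y₁) ^ 2 + A) (2 * (y - y₁)) y := by
    have := (((hasDerivAt_id y).sub_const y₁).pow 2).add_const A
    simpa using this
  have h2 : HasDerivAt (fun y : ℝ => Real.sqrt ((y - y₁) ^ 2 + A))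
      ((1 / (2 * s)) * (2 * (y - y₁))) y :=
    (Real.hasDerivAt_sqrt (ne_of_gt hS)).comp y h1
  have h3 : HasDerivAt (fun y : ℝ => A * Real.sqrt ((y - y₁) ^ 2 + A))
      (A * ((1 / (2 * s)) * (2 * (y - y₁)))) y := h2.const_mul A
  have hnum : HasDerivAt (fun y : ℝ => y - y₁) 1 y := (hasDerivAt_id y).sub_const y₁
  have hden : A * s ≠ 0 := by positivity
  have h4 := hnum.div h3 hden
  refine h4.congr_deriv ?_
  symm
  rw [← hs]
  field_simp
  linear_combination (-1) * hs2

private lemma outer_deriv (x₁ z₁ b : ℝ) (hz : z₁ ≠ 0) (x : ℝ) :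
    HasDerivAt (fun x => z₁⁻¹ *
        Real.arctan ((x - x₁) * b / (z₁ * Real.sqrt (b ^ 2 + ((x - x₁) ^ 2 + z₁ ^ 2)))))
      (b / (((x - x₁) ^ 2 + z₁ ^ 2) * Real.sqrt (b ^ 2 + ((x - x₁) ^ 2 + z₁ ^ 2)))) x := by
  have hz2 : (0:ℝ) < z₁ ^ 2 := by positivity
  have hS : (0:ℝ) < b ^ 2 + ((x - x₁) ^ 2 + z₁ ^ 2) := by positivity
  set s := Real.sqrt (b ^ 2 + ((x - x₁) ^ 2 + z₁ ^ 2)) with hs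
  have hsp : 0 < s := Real.sqrt_pos.mpr hS
  have hs2 : s ^ 2 = b ^ 2 + ((x - x₁) ^ 2 + z₁ ^ 2) := Real.sq_sqrt hS.le
  have h1 : HasDerivAt (fun x : ℝ => b ^ 2 + ((x - x₁) ^ 2 + z₁ ^ 2)) (2 * (x - x₁)) x := by
    have := ((((hasDerivAt_id x).sub_const x₁).pow 2).add_const (z₁ ^ 2)).const_add (b ^ 2)
    simpa using this
  have h2 : HasDerivAt (fun x : ℝ => Real.sqrt (b ^ 2 + ((x - x₁) ^ 2 + z₁ ^ 2)))
      ((1 / (2 * s)) * (2 * (x - x₁))) x :=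
    (Real.hasDerivAt_sqrt (ne_of_gt hS)).comp x h1
  have h3 : HasDerivAt (fun x : ℝ => z₁ * Real.sqrt (b ^ 2 + ((x - x₁) ^ 2 + z₁ ^ 2)))
      (z₁ * ((1 / (2 * s)) * (2 * (x - x₁)))) x := h2.const_mul z₁
  have hnum : HasDerivAt (fun x : ℝ => (x - x₁) * b) b x := by
    simpa using ((hasDerivAt_id x).sub_const x₁).mul_const b
  have hden : z₁ * s ≠ 0 := mul_ne_zero hz (ne_of_gt hsp)
  have h4 := (hnum.div h3 hden).arctan
  have h5 := h4.const_mul z₁⁻¹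
  refine h5.congr_deriv ?_
  symm
  simp only [Pi.div_apply]
  rw [← hs]
  have h1q : 1 + ((x - x₁) * b / (z₁ * s)) ^ 2 ≠ 0 := by positivity
  field_simp
  ring_nf
  linear_combination (-b * (x - x₁) ^ 2) * hs2

private lemma inner_integral (y₁ A Ly : ℝ) (hA : 0 < A) :
    (∫ y in (-Ly)..Ly, ((y - y₁) ^ 2 + A) ^ (-(3:ℝ)/2)) =
      (Ly - y₁) / (A * Real.sqrt ((Ly - y₁) ^ 2 + A))
      - (-Ly - y₁) / (A * Real.sqrt ((-Ly - y₁) ^ 2 + A)) := by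
  have hcong : Set.EqOn (fun y => ((y - y₁) ^ 2 + A) ^ (-(3:ℝ)/2))
      (fun y => (Real.sqrt ((y - y₁) ^ 2 + A) ^ 3)⁻¹) (Set.uIcc (-Ly) Ly) :=
    fun y _ => pow_neg_three_half _ (by positivity)
  rw [intervalIntegral.integral_congr hcong]
  exact intervalIntegral.integral_eq_sub_of_hasDerivAt
    (fun y _ => inner_deriv y₁ A hA y)
    (Continuous.intervalIntegrable
      (Continuous.inv₀
        ((Real.continuous_sqrt.comp (by continuity)).pow 3)
        (fun y => pow_ne_zero 3 (ne_of_gt (Real.sqrt_pos.mpr (by positivity))))) _ _)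

private lemma outer_integral (x₁ z₁ b Lx : ℝ) (hz : z₁ ≠ 0) :
    (∫ x in (-Lx)..Lx,
        b / (((x - x₁) ^ 2 + z₁ ^ 2) * Real.sqrt (b ^ 2 + ((x - x₁) ^ 2 + z₁ ^ 2)))) =
      z₁⁻¹ * Real.arctan ((Lx - x₁) * b /
          (z₁ * Real.sqrt (b ^ 2 + ((Lx - x₁) ^ 2 + z₁ ^ 2))))
      - z₁⁻¹ * Real.arctan ((-Lx - x₁) * b /
          (z₁ * Real.sqrt (b ^ 2 + ((-Lx - x₁) ^ 2 + z₁ ^ 2)))) := by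
  refine intervalIntegral.integral_eq_sub_of_hasDerivAt
    (fun x _ => outer_deriv x₁ z₁ b hz x)
    (Continuous.intervalIntegrable ?_ _ _)
  refine continuous_const.div ?_ (fun x => ?_)
  · exact ((continuous_id.sub continuous_const).pow 2 |>.add continuous_const).mul
      (Real.continuous_sqrt.comp (by continuity))
  · have hz2 : (0:ℝ) < z₁ ^ 2 := by positivity
    positivity

theorem notable_integral_rectangle (x₁ y₁ z₁ Lx Ly : ℝ) (hz : z₁ ≠ 0)
    (hLx : 0 < Lx) (hLy : 0 < Ly) :
    (∫ x in (-Lx)..Lx, ∫ y in (-Ly)..Ly,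
        ((x - x₁) ^ 2 + (y - y₁) ^ 2 + z₁ ^ 2) ^ (-(3 : ℝ) / 2)) =
      z₁⁻¹ *
        (Real.arctan ((x₁ - Lx) * (y₁ - Ly) /
            (z₁ * Real.sqrt ((x₁ - Lx) ^ 2 + (y₁ - Ly) ^ 2 + z₁ ^ 2)))
         - Real.arctan ((x₁ - Lx) * (y₁ - (-Ly)) /
            (z₁ * Real.sqrt ((x₁ - Lx) ^ 2 + (y₁ - (-Ly)) ^ 2 + z₁ ^ 2)))
         - Real.arctan ((x₁ - (-Lx)) * (y₁ - Ly) /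
            (z₁ * Real.sqrt ((x₁ - (-Lx)) ^ 2 + (y₁ - Ly) ^ 2 + z₁ ^ 2)))
         + Real.arctan ((x₁ - (-Lx)) * (y₁ - (-Ly)) /
            (z₁ * Real.sqrt ((x₁ - (-Lx)) ^ 2 + (y₁ - (-Ly)) ^ 2 + z₁ ^ 2)))) := by
  have hz2 : (0:ℝ) < z₁ ^ 2 := by positivity
  have key : ∀ x : ℝ,
      (∫ y in (-Ly)..Ly, ((x - x₁) ^ 2 + (y - y₁) ^ 2 + z₁ ^ 2) ^ (-(3 : ℝ) / 2)) =
        (Ly - y₁) / (((x - x₁) ^ 2 + z₁ ^ 2) *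
            Real.sqrt ((Ly - y₁) ^ 2 + ((x - x₁) ^ 2 + z₁ ^ 2)))
        - (-Ly - y₁) / (((x - x₁) ^ 2 + z₁ ^ 2) *
            Real.sqrt ((-Ly - y₁) ^ 2 + ((x - x₁) ^ 2 + z₁ ^ 2))) := by
    intro x
    have hcong : Set.EqOn
        (fun y => ((x - x₁) ^ 2 + (y - y₁) ^ 2 + z₁ ^ 2) ^ (-(3 : ℝ) / 2))
        (fun y => ((y - y₁) ^ 2 + ((x - x₁) ^ 2 + z₁ ^ 2)) ^ (-(3 : ℝ) / 2))
        (Set.uIcc (-Ly) Ly) := fun y _ => by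
      simp only
      rw [show (x - x₁) ^ 2 + (y - y₁) ^ 2 + z₁ ^ 2
          = (y - y₁) ^ 2 + ((x - x₁) ^ 2 + z₁ ^ 2) from by ring]
    rw [intervalIntegral.integral_congr hcong,
      inner_integral y₁ ((x - x₁) ^ 2 + z₁ ^ 2) Ly (by positivity)]
  simp only [key]
  have hcont : ∀ b : ℝ, Continuous (fun x : ℝ =>
      b / (((x - x₁) ^ 2 + z₁ ^ 2) * Real.sqrt (b ^ 2 + ((x - x₁) ^ 2 + z₁ ^ 2)))) := by
    intro b
    refine continuous_const.div ?_ (fun x => ?_)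
    · exact ((continuous_id.sub continuous_const).pow 2 |>.add continuous_const).mul
        (Real.continuous_sqrt.comp (by continuity))
    · positivity
  rw [intervalIntegral.integral_sub
      ((hcont (Ly - y₁)).intervalIntegrable _ _)
      ((hcont (-Ly - y₁)).intervalIntegrable _ _),
    outer_integral x₁ z₁ (Ly - y₁) Lx hz,
    outer_integral x₁ z₁ (-Ly - y₁) Lx hz]
  rw [show (x₁ - Lx) * (y₁ - Ly) = (Lx - x₁) * (Ly - y₁) from by ring,
    show (x₁ - Lx) ^ 2 + (y₁ - Ly) ^ 2 + z₁ ^ 2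
        = (Ly - y₁) ^ 2 + ((Lx - x₁) ^ 2 + z₁ ^ 2) from by ring,
    show (x₁ - Lx) * (y₁ - (-Ly)) = (Lx - x₁) * (-Ly - y₁) from by ring,
    show (x₁ - Lx) ^ 2 + (y₁ - (-Ly)) ^ 2 + z₁ ^ 2
        = (-Ly - y₁) ^ 2 + ((Lx - x₁) ^ 2 + z₁ ^ 2) from by ring,
    show (x₁ - (-Lx)) * (y₁ - Ly) = (-Lx - x₁) * (Ly - y₁) from by ring,
    show (x₁ - (-Lx)) ^ 2 + (y₁ - Ly) ^ 2 + z₁ ^ 2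
        = (Ly - y₁) ^ 2 + ((-Lx - x₁) ^ 2 + z₁ ^ 2) from by ring,
    show (x₁ - (-Lx)) * (y₁ - (-Ly)) = (-Lx - x₁) * (-Ly - y₁) from by ring,
    show (x₁ - (-Lx)) ^ 2 + (y₁ - (-Ly)) ^ 2 + z₁ ^ 2
        = (-Ly - y₁) ^ 2 + ((-Lx - x₁) ^ 2 + z₁ ^ 2) from by ring]
  ring
end

section
/- With P(x,y) = d_Tx(x,y) + d_Rx(x,y) as above and (x_s,y_s) a stationary point of P at which the common polar angle is θ_s (so cosθ_s = z_T/d_Tx(x_s,y_s) = z_R/d_Rx(x_s,y_s)), the determinant of the Hessian of P at (x_s,y_s) equals cos²θ_s · (1/d_Tx(x_s,y_s) + 1/d_Rx(x_s,y_s))². -/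
lemma hasDerivAt_sqrt_quad (a k t : ℝ) (hk : 0 < k) :
    HasDerivAt (fun s => Real.sqrt ((s - a) ^ 2 + k))
      ((t - a) / Real.sqrt ((t - a) ^ 2 + k)) t := by
  have hq : HasDerivAt (fun s => (s - a) ^ 2 + k) (2 * (t - a)) t := by
    have h1 : HasDerivAt (fun s : ℝ => s - a) 1 t := (hasDerivAt_id t).sub_const a
    simpa using (h1.pow 2).add_const k
  have hpos : 0 < (t - a) ^ 2 + k := by positivity
  have hs : 0 < Real.sqrt ((t - a) ^ 2 + k) := Real.sqrt_pos.mpr hpos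
  have h := (Real.hasDerivAt_sqrt hpos.ne').comp t hq
  refine h.congr_deriv (Eq.symm ?_)
  set s := Real.sqrt ((t - a) ^ 2 + k)
  field_simp

lemma hasDerivAt_ratio (a k t : ℝ) (hk : 0 < k) :
    HasDerivAt (fun s => (s - a) / Real.sqrt ((s - a) ^ 2 + k))
      (k / Real.sqrt ((t - a) ^ 2 + k) ^ 3) t := by
  have hpos : 0 < (t - a) ^ 2 + k := by positivity
  have hs : 0 < Real.sqrt ((t - a) ^ 2 + k) := Real.sqrt_pos.mpr hpos
  have hsq : Real.sqrt ((t - a) ^ 2 + k) ^ 2 = (t - a) ^ 2 + k := Real.sq_sqrt hpos.le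
  have h1 : HasDerivAt (fun s : ℝ => s - a) 1 t := (hasDerivAt_id t).sub_const a
  have h2 := hasDerivAt_sqrt_quad a k t hk
  have h := h1.div h2 hs.ne'
  refine h.congr_deriv (Eq.symm ?_)
  set s := Real.sqrt ((t - a) ^ 2 + k) with hsdef
  have hnum : 1 * s - (t - a) * ((t - a) / s) = k / s := by
    field_simp
    linear_combination hsq
  rw [hnum]
  ring

lemma hasDerivAt_ratio_const (C a k t : ℝ) (hk : 0 < k) :
    HasDerivAt (fun s => C / Real.sqrt ((s - a) ^ 2 + k))
      (-C * (t - a) / Real.sqrt ((t - a) ^ 2 + k) ^ 3) t := by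
  have hpos : 0 < (t - a) ^ 2 + k := by positivity
  have hs : 0 < Real.sqrt ((t - a) ^ 2 + k) := Real.sqrt_pos.mpr hpos
  have h2 := hasDerivAt_sqrt_quad a k t hk
  have h := (hasDerivAt_const t C).div h2 hs.ne'
  refine h.congr_deriv (Eq.symm ?_)
  set s := Real.sqrt ((t - a) ^ 2 + k)
  field_simp
  ring

/-- Determinant of the Hessian of `P = d_Tx + d_Rx` at a stationary point `(x_s, y_s)`
with common polar angle `θ_s` equals `cos²θ_s (1/d_Tx + 1/d_Rx)²`. -/
theorem hessian_det_at_stationary_point (xT yT zT xR yR zR xs ys : ℝ)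
    (hzT : 0 < zT) (hzR : 0 < zR)
    (P : ℝ → ℝ → ℝ)
    (hP : ∀ x y, P x y = Real.sqrt ((x - xT) ^ 2 + (y - yT) ^ 2 + zT ^ 2)
                        + Real.sqrt ((x - xR) ^ 2 + (y - yR) ^ 2 + zR ^ 2))
    (hx : deriv (fun x => P x ys) xs = 0)
    (hy : deriv (fun y => P xs y) ys = 0)
    (cosθ dT dR : ℝ)
    (hdT : dT = Real.sqrt ((xs - xT) ^ 2 + (ys - yT) ^ 2 + zT ^ 2))
    (hdR : dR = Real.sqrt ((xs - xR) ^ 2 + (ys - yR) ^ 2 + zR ^ 2))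
    (hcosT : cosθ = zT / dT) (hcosR : cosθ = zR / dR) :
    (deriv (fun x => deriv (fun x' => P x' ys) x) xs) *
      (deriv (fun y => deriv (fun y' => P xs y') y) ys) -
      (deriv (fun y => deriv (fun x => P x y) xs) ys) ^ 2 =
    cosθ ^ 2 * (1 / dT + 1 / dR) ^ 2 := by
  -- positivity of constants
  have hkTx : (0:ℝ) < (ys - yT) ^ 2 + zT ^ 2 := by positivity
  have hkRx : (0:ℝ) < (ys - yR) ^ 2 + zR ^ 2 := by positivity
  have hkTy : (0:ℝ) < (xs - xT) ^ 2 + zT ^ 2 := by positivity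
  have hkRy : (0:ℝ) < (xs - xR) ^ 2 + zR ^ 2 := by positivity
  have hdTpos : 0 < dT := by rw [hdT]; apply Real.sqrt_pos.mpr; positivity
  have hdRpos : 0 < dR := by rw [hdR]; apply Real.sqrt_pos.mpr; positivity
  have hdTne := hdTpos.ne'
  have hdRne := hdRpos.ne'
  have hdT2 : dT ^ 2 = (xs - xT) ^ 2 + (ys - yT) ^ 2 + zT ^ 2 := by
    rw [hdT]; exact Real.sq_sqrt (by positivity)
  have hdR2 : dR ^ 2 = (xs - xR) ^ 2 + (ys - yR) ^ 2 + zR ^ 2 := by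
    rw [hdR]; exact Real.sq_sqrt (by positivity)
  -- sqrt reassociations
  have hdT1 : Real.sqrt ((xs - xT) ^ 2 + ((ys - yT) ^ 2 + zT ^ 2)) = dT := by
    rw [hdT]; congr 1; ring
  have hdR1 : Real.sqrt ((xs - xR) ^ 2 + ((ys - yR) ^ 2 + zR ^ 2)) = dR := by
    rw [hdR]; congr 1; ring
  have hdT1y : Real.sqrt ((ys - yT) ^ 2 + ((xs - xT) ^ 2 + zT ^ 2)) = dT := by
    rw [hdT]; congr 1; ring
  have hdR1y : Real.sqrt ((ys - yR) ^ 2 + ((xs - xR) ^ 2 + zR ^ 2)) = dR := by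
    rw [hdR]; congr 1; ring
  -- the partial-in-x function, for every y
  have hDx : ∀ x y : ℝ, HasDerivAt (fun x' => P x' y)
      ((x - xT) / Real.sqrt ((x - xT) ^ 2 + ((y - yT) ^ 2 + zT ^ 2))
        + (x - xR) / Real.sqrt ((x - xR) ^ 2 + ((y - yR) ^ 2 + zR ^ 2))) x := by
    intro x y
    have hfun : (fun x' => P x' y) = fun x' =>
        Real.sqrt ((x' - xT) ^ 2 + ((y - yT) ^ 2 + zT ^ 2))
          + Real.sqrt ((x' - xR) ^ 2 + ((y - yR) ^ 2 + zR ^ 2)) := by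
      funext x'
      rw [hP]
      simp only [add_assoc]
    rw [hfun]
    exact (hasDerivAt_sqrt_quad xT _ x (by positivity)).add
      (hasDerivAt_sqrt_quad xR _ x (by positivity))
  -- the partial-in-y function, for x = xs
  have hDy : ∀ y : ℝ, HasDerivAt (fun y' => P xs y')
      ((y - yT) / Real.sqrt ((y - yT) ^ 2 + ((xs - xT) ^ 2 + zT ^ 2))
        + (y - yR) / Real.sqrt ((y - yR) ^ 2 + ((xs - xR) ^ 2 + zR ^ 2))) y := by
    intro y
    have hfun : (fun y' => P xs y') = fun y' =>
        Real.sqrt ((y' - yT) ^ 2 + ((xs - xT) ^ 2 + zT ^ 2))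
          + Real.sqrt ((y' - yR) ^ 2 + ((xs - xR) ^ 2 + zR ^ 2)) := by
      funext y'
      rw [hP]
      have e1 : (xs - xT) ^ 2 + (y' - yT) ^ 2 + zT ^ 2
          = (y' - yT) ^ 2 + ((xs - xT) ^ 2 + zT ^ 2) := by ring
      have e2 : (xs - xR) ^ 2 + (y' - yR) ^ 2 + zR ^ 2
          = (y' - yR) ^ 2 + ((xs - xR) ^ 2 + zR ^ 2) := by ring
      rw [e1, e2]
    rw [hfun]
    exact (hasDerivAt_sqrt_quad yT _ y hkTy).add (hasDerivAt_sqrt_quad yR _ y hkRy)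
  -- second derivative in x at xs
  have hfx : (fun x => deriv (fun x' => P x' ys) x) = fun x =>
      (x - xT) / Real.sqrt ((x - xT) ^ 2 + ((ys - yT) ^ 2 + zT ^ 2))
        + (x - xR) / Real.sqrt ((x - xR) ^ 2 + ((ys - yR) ^ 2 + zR ^ 2)) :=
    funext fun x => (hDx x ys).deriv
  have hPxx : deriv (fun x => deriv (fun x' => P x' ys) x) xs
      = ((ys - yT) ^ 2 + zT ^ 2) / dT ^ 3 + ((ys - yR) ^ 2 + zR ^ 2) / dR ^ 3 := by
    rw [hfx]
    have := ((hasDerivAt_ratio xT _ xs hkTx).add (hasDerivAt_ratio xR _ xs hkRx)).deriv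
    simp only [Pi.add_def] at this
    rw [this, hdT1, hdR1]
  -- second derivative in y at ys
  have hfy : (fun y => deriv (fun y' => P xs y') y) = fun y =>
      (y - yT) / Real.sqrt ((y - yT) ^ 2 + ((xs - xT) ^ 2 + zT ^ 2))
        + (y - yR) / Real.sqrt ((y - yR) ^ 2 + ((xs - xR) ^ 2 + zR ^ 2)) :=
    funext fun y => (hDy y).deriv
  have hPyy : deriv (fun y => deriv (fun y' => P xs y') y) ys
      = ((xs - xT) ^ 2 + zT ^ 2) / dT ^ 3 + ((xs - xR) ^ 2 + zR ^ 2) / dR ^ 3 := by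
    rw [hfy]
    have := ((hasDerivAt_ratio yT _ ys hkTy).add (hasDerivAt_ratio yR _ ys hkRy)).deriv
    simp only [Pi.add_def] at this
    rw [this, hdT1y, hdR1y]
  -- mixed derivative
  have hfm : (fun y => deriv (fun x => P x y) xs) = fun y =>
      (xs - xT) / Real.sqrt ((y - yT) ^ 2 + ((xs - xT) ^ 2 + zT ^ 2))
        + (xs - xR) / Real.sqrt ((y - yR) ^ 2 + ((xs - xR) ^ 2 + zR ^ 2)) := by
    funext y
    rw [(hDx xs y).deriv]
    have e1 : (xs - xT) ^ 2 + ((y - yT) ^ 2 + zT ^ 2)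
        = (y - yT) ^ 2 + ((xs - xT) ^ 2 + zT ^ 2) := by ring
    have e2 : (xs - xR) ^ 2 + ((y - yR) ^ 2 + zR ^ 2)
        = (y - yR) ^ 2 + ((xs - xR) ^ 2 + zR ^ 2) := by ring
    rw [e1, e2]
  have hPxy : deriv (fun y => deriv (fun x => P x y) xs) ys
      = -(xs - xT) * (ys - yT) / dT ^ 3 + -(xs - xR) * (ys - yR) / dR ^ 3 := by
    rw [hfm]
    have := ((hasDerivAt_ratio_const (xs - xT) yT _ ys hkTy).add
      (hasDerivAt_ratio_const (xs - xR) yR _ ys hkRy)).deriv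
    simp only [Pi.add_def] at this
    rw [this, hdT1y, hdR1y]
  -- first-order conditions in terms of dT, dR
  have hx' : (xs - xT) / dT + (xs - xR) / dR = 0 := by
    have h := hx
    rw [(hDx xs ys).deriv, hdT1, hdR1] at h
    exact h
  have hy' : (ys - yT) / dT + (ys - yR) / dR = 0 := by
    have h := hy
    rw [(hDy ys).deriv, hdT1y, hdR1y] at h
    exact h
  -- substitution variables
  obtain ⟨u, hu⟩ : ∃ u : ℝ, u = (xs - xT) / dT := ⟨_, rfl⟩
  obtain ⟨v, hv⟩ : ∃ v : ℝ, v = (ys - yT) / dT := ⟨_, rfl⟩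
  have e1 : xs - xT = u * dT := by rw [hu]; field_simp
  have e2 : ys - yT = v * dT := by rw [hv]; field_simp
  have e3 : xs - xR = -u * dR := by
    have h : (xs - xR) / dR = -u := by rw [hu]; linarith [hx']
    field_simp at h
    linarith [h]
  have e4 : ys - yR = -v * dR := by
    have h : (ys - yR) / dR = -v := by rw [hv]; linarith [hy']
    field_simp at h
    linarith [h]
  have e5 : zT = cosθ * dT := by rw [hcosT]; field_simp
  have e6 : zR = cosθ * dR := by rw [hcosR]; field_simp
  have huv : u ^ 2 + v ^ 2 + cosθ ^ 2 = 1 := by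
    rw [e1, e2, e5] at hdT2
    have h0 : (u ^ 2 + v ^ 2 + cosθ ^ 2 - 1) * dT ^ 2 = 0 := by linear_combination -hdT2
    have := mul_eq_zero.mp h0
    rcases this with h | h
    · linarith
    · exact absurd h (pow_ne_zero 2 hdTne)
  rw [hPxx, hPyy, hPxy, e1, e2, e3, e4, e5, e6]
  have hA : ((v * dT) ^ 2 + (cosθ * dT) ^ 2) / dT ^ 3
      + ((-v * dR) ^ 2 + (cosθ * dR) ^ 2) / dR ^ 3
      = (v ^ 2 + cosθ ^ 2) * (1 / dT + 1 / dR) := by field_simp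
  have hB : ((u * dT) ^ 2 + (cosθ * dT) ^ 2) / dT ^ 3
      + ((-u * dR) ^ 2 + (cosθ * dR) ^ 2) / dR ^ 3
      = (u ^ 2 + cosθ ^ 2) * (1 / dT + 1 / dR) := by field_simp
  have hC : -(u * dT) * (v * dT) / dT ^ 3 + -(-u * dR) * (-v * dR) / dR ^ 3
      = -(u * v) * (1 / dT + 1 / dR) := by field_simp; ring
  rw [hA, hB, hC]
  linear_combination (cosθ ^ 2 * (1 / dT + 1 / dR) ^ 2) * huv
end

section
/- Let R₁ = cos²Θ_r/(cosΘ_i + cosΘ_r)², R₂ = cos²Θ_i/(cosΘ_i + cosΘ_r)², and R₃ = (cos²Θ_i + cos²Θ_r + sin²Θ_i sin²Θ_r sin²(Φ_i − Φ_r))/(cosΘ_i + cosΘ_r)², with cosΘ_i, cosΘ_r > 0. Define f(ζ₁,ζ₂) = √(R₁ζ₁² + R₂ζ₂² + R₃ζ₁ζ₂). Then for ζ'₁ = ζ'₂ = ζ' > 0, the first-order Taylor approximation of f at (ζ',ζ') equals K₁ζ₁ + K₂ζ₂ with K₁ = (R₁ + R₃/2)/√(R₁ + R₂ + R₃) and K₂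 = (R₂ + R₃/2)/√(R₁ + R₂ + R₃), independent of ζ'. -/
/-- Linearization of the weighted distance `f(ζ₁,ζ₂) = √(R₁ζ₁² + R₂ζ₂² + R₃ζ₁ζ₂)` at a
point `(ζ',ζ')` on the diagonal: the first-order Taylor approximation equals
`K₁ζ₁ + K₂ζ₂`, independently of `ζ'`. -/
theorem weighted_sum_distance_linearization (Θi Θr Φi Φr : ℝ)
    (hi : 0 < Real.cos Θi) (hr : 0 < Real.cos Θr)
    (R₁ R₂ R₃ : ℝ)
    (hR₁ : R₁ = Real.cos Θr ^ 2 / (Real.cos Θi + Real.cos Θr) ^ 2)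
    (hR₂ : R₂ = Real.cos Θi ^ 2 / (Real.cos Θi + Real.cos Θr) ^ 2)
    (hR₃ : R₃ = (Real.cos Θi ^ 2 + Real.cos Θr ^ 2 +
        Real.sin Θi ^ 2 * Real.sin Θr ^ 2 * Real.sin (Φi - Φr) ^ 2) /
        (Real.cos Θi + Real.cos Θr) ^ 2)
    (f : ℝ → ℝ → ℝ)
    (hf : ∀ ζ₁ ζ₂, f ζ₁ ζ₂ = Real.sqrt (R₁ * ζ₁ ^ 2 + R₂ * ζ₂ ^ 2 + R₃ * ζ₁ * ζ₂))
    (K₁ K₂ : ℝ)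
    (hK₁ : K₁ = (R₁ + R₃ / 2) / Real.sqrt (R₁ + R₂ + R₃))
    (hK₂ : K₂ = (R₂ + R₃ / 2) / Real.sqrt (R₁ + R₂ + R₃))
    (ζ' : ℝ) (hζ' : 0 < ζ') :
    ∀ ζ₁ ζ₂ : ℝ,
      f ζ' ζ' + deriv (fun t => f t ζ') ζ' * (ζ₁ - ζ')
        + deriv (fun t => f ζ' t) ζ' * (ζ₂ - ζ') = K₁ * ζ₁ + K₂ * ζ₂ := by
  have hd : (0:ℝ) < (Real.cos Θi + Real.cos Θr) ^ 2 := by positivity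
  have hR₁pos : 0 < R₁ := by rw [hR₁]; positivity
  have hR₂pos : 0 < R₂ := by rw [hR₂]; positivity
  have hR₃pos : 0 < R₃ := by
    rw [hR₃]
    have : (0:ℝ) < Real.cos Θi ^ 2 + Real.cos Θr ^ 2 +
        Real.sin Θi ^ 2 * Real.sin Θr ^ 2 * Real.sin (Φi - Φr) ^ 2 := by positivity
    positivity
  set S := R₁ + R₂ + R₃ with hS
  have hSpos : 0 < S := by positivity
  have hsqrtS : 0 < Real.sqrt S := Real.sqrt_pos.mpr hSpos
  have hval : R₁ * ζ' ^ 2 + R₂ * ζ' ^ 2 + R₃ * ζ' * ζ' = S * ζ' ^ 2 := by ring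
  have hfval : f ζ' ζ' = ζ' * Real.sqrt S := by
    rw [hf, hval, mul_comm, Real.sqrt_mul (by positivity),
      Real.sqrt_sq hζ'.le, mul_comm]
  have hsqg : Real.sqrt (S * ζ' ^ 2) = Real.sqrt S * ζ' := by
    rw [Real.sqrt_mul hSpos.le, Real.sqrt_sq hζ'.le]
  -- derivative in first variable
  have hd1 : HasDerivAt (fun t => f t ζ') ((R₁ + R₃ / 2) / Real.sqrt S) ζ' := by
    have hg : HasDerivAt (fun t : ℝ => R₁ * t ^ 2 + R₂ * ζ' ^ 2 + R₃ * t * ζ')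
        (R₁ * (2 * ζ') + R₃ * ζ') ζ' := by
      have h1 : HasDerivAt (fun t : ℝ => t ^ 2) (2 * ζ') ζ' := by
        simpa using (hasDerivAt_pow 2 ζ')
      have := ((h1.const_mul R₁).add_const (R₂ * ζ' ^ 2)).add
        (((hasDerivAt_id ζ').const_mul R₃).mul_const ζ')
      simpa [Pi.add_def, mul_comm, mul_assoc] using this
    have hne : R₁ * ζ' ^ 2 + R₂ * ζ' ^ 2 + R₃ * ζ' * ζ' ≠ 0 := by
      rw [hval]; positivity
    have h := hg.sqrt hne
    have heq : (fun t => f t ζ') = fun t => Real.sqrt (R₁ * t ^ 2 + R₂ * ζ' ^ 2 + R₃ * t * ζ') := by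
      funext t; rw [hf]
    rw [heq]
    convert h using 1
    rw [hval, hsqg]
    field_simp
  have hd2 : HasDerivAt (fun t => f ζ' t) ((R₂ + R₃ / 2) / Real.sqrt S) ζ' := by
    have hg : HasDerivAt (fun t : ℝ => R₁ * ζ' ^ 2 + R₂ * t ^ 2 + R₃ * ζ' * t)
        (R₂ * (2 * ζ') + R₃ * ζ') ζ' := by
      have h1 : HasDerivAt (fun t : ℝ => t ^ 2) (2 * ζ') ζ' := by
        simpa using (hasDerivAt_pow 2 ζ')
      have := ((h1.const_mul R₂).const_add (R₁ * ζ' ^ 2)).add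
        ((hasDerivAt_id ζ').const_mul (R₃ * ζ'))
      simpa [Pi.add_def, mul_comm, mul_assoc, mul_left_comm, add_assoc] using this
    have hne : R₁ * ζ' ^ 2 + R₂ * ζ' ^ 2 + R₃ * ζ' * ζ' ≠ 0 := by
      rw [hval]; positivity
    have h := hg.sqrt (by simpa using hne)
    have heq : (fun t => f ζ' t) = fun t => Real.sqrt (R₁ * ζ' ^ 2 + R₂ * t ^ 2 + R₃ * ζ' * t) := by
      funext t; rw [hf]
    rw [heq]
    convert h using 1
    have : R₁ * ζ' ^ 2 + R₂ * ζ' ^ 2 + R₃ * ζ' * ζ' = S * ζ' ^ 2 := hval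
    rw [this, hsqg]
    field_simp
  intro ζ₁ ζ₂
  rw [hd1.deriv, hd2.deriv, hfval, hK₁, hK₂]
  have hsq : Real.sqrt S * Real.sqrt S = S := Real.mul_self_sqrt hSpos.le
  field_simp
  nlinarith [hsq]
end
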